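/- Let X: U → ℝ³\{0} be a regular parametrized surface with Euclidean Gaussian curvature K, mean curvature H and unit normal N. The Weingarten relation 2K̃_E − K̃ = 0 holds in the Radial Model (ℝ³\{0}, (1/|x|²)g₀) if and only if ⟨X,X⟩·K + 2⟨X,N⟩·H = 0, i.e., X is an EDSGHW-surface in Euclidean ℝ³. -/

import Mathlib

/- Theorem 4.2: a regular surface X : U → ℝ³\{0} satisfies the Weingarten
   relation 2K̃_E − K̃ = 0 in the Radial Model iff ⟨X,X⟩K + 2⟨X,N⟩H = 0 on U,
   i.e. iff X is an EDSGHW-surface in Euclidean ℝ³.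
   Here t = ⟨X,X⟩, c = ⟨X,N⟩, Euclidean principal curvatures −λᵢ,
   H = −(λ₁+λ₂)/2, K = λ₁λ₂, Radial-Model principal curvatures
   λ̃ᵢ = √t λᵢ − c/√t, K̃_E = λ̃₁λ̃₂, and K̃ given by Proposition 4.1 with h = √. -/

noncomputable section

open scoped RealInnerProductSpace

abbrev E3 := EuclideanSpace ℝ (Fin 3)

/-- EDSGHW-surfaces: ⟨X,X⟩K + 2⟨X,N⟩H = 0 on U. -/
def IsEDSGHW (U : Set (ℝ × ℝ)) (X N : ℝ × ℝ → E3) (H K : ℝ × ℝ → ℝ) : Prop :=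
  ∀ p ∈ U, ⟪X p, X p⟫ * K p + 2 * ⟪X p, N p⟫ * H p = 0

lemma deriv_sqrt_pos {t : ℝ} (ht : 0 < t) :
    deriv Real.sqrt t = 1 / (2 * Real.sqrt t) :=
  (Real.hasDerivAt_sqrt ht.ne').deriv

lemma deriv_deriv_sqrt_pos {t : ℝ} (ht : 0 < t) :
    deriv (deriv Real.sqrt) t = -1 / (4 * t * Real.sqrt t) := by
  have hev : deriv Real.sqrt =ᶠ[nhds t] fun x => 1 / (2 * Real.sqrt x) := by
    filter_upwards [eventually_gt_nhds ht] with x hx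
    exact deriv_sqrt_pos hx
  rw [hev.deriv_eq]
  have hs : Real.sqrt t ≠ 0 := (Real.sqrt_pos.2 ht).ne'
  have h1 : HasDerivAt (fun x => 2 * Real.sqrt x) (2 * (1 / (2 * Real.sqrt t))) t :=
    (Real.hasDerivAt_sqrt ht.ne').const_mul 2
  have h2 : HasDerivAt (fun x => 1 / (2 * Real.sqrt x))
      (-(2 * (1 / (2 * Real.sqrt t))) / (2 * Real.sqrt t) ^ 2) t := by
    simpa [one_div, Pi.inv_def] using h1.inv (by positivity)
  rw [h2.deriv]
  have h4 : Real.sqrt t * Real.sqrt t = t := Real.mul_self_sqrt ht.le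
  field_simp
  nlinarith [h4, Real.sqrt_pos.2 ht]

lemma key_alg (s c l1 l2 : ℝ) (hs : s ≠ 0) :
    2 * ((s * l1 - c / s) * (s * l2 - c / s)) -
      (s ^ 2 * (l1 * l2)
        + 4 * (s * (-1 / (4 * s ^ 2 * s)) - (1 / (2 * s)) ^ 2) * (s ^ 2 - c ^ 2)
        + 4 * s * (1 / (2 * s)) * (1 + (-(l1 + l2) / 2) * c))
    = s ^ 2 * (l1 * l2) + 2 * c * (-(l1 + l2) / 2) := by
  field_simp
  ring

theorem stmt19 (U : Set (ℝ × ℝ)) (X N : ℝ × ℝ → E3)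
    (lam1 lam2 H K KE Ktilde : ℝ × ℝ → ℝ)
    (hX0 : ∀ p ∈ U, X p ≠ 0) (hNorm : ∀ p ∈ U, ‖N p‖ = 1)
    (hH : ∀ p ∈ U, H p = -(lam1 p + lam2 p) / 2)
    (hK : ∀ p ∈ U, K p = lam1 p * lam2 p)
    (hKE : ∀ p ∈ U, KE p =
      (Real.sqrt ⟪X p, X p⟫ * lam1 p - ⟪X p, N p⟫ / Real.sqrt ⟪X p, X p⟫) *
      (Real.sqrt ⟪X p, X p⟫ * lam2 p - ⟪X p, N p⟫ / Real.sqrt ⟪X p, X p⟫))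
    (hKt : ∀ p ∈ U, Ktilde p = (Real.sqrt ⟪X p, X p⟫) ^ 2 * K p
      + 4 * (Real.sqrt ⟪X p, X p⟫ * deriv (deriv Real.sqrt) ⟪X p, X p⟫
          - (deriv Real.sqrt ⟪X p, X p⟫) ^ 2) * (⟪X p, X p⟫ - ⟪X p, N p⟫ ^ 2)
      + 4 * Real.sqrt ⟪X p, X p⟫ * deriv Real.sqrt ⟪X p, X p⟫
          * (1 + H p * ⟪X p, N p⟫)) :
    (∀ p ∈ U, 2 * KE p - Ktilde p = 0) ↔ IsEDSGHW U X N H K := by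
  have main : ∀ p ∈ U, 2 * KE p - Ktilde p
      = ⟪X p, X p⟫ * K p + 2 * ⟪X p, N p⟫ * H p := by
    intro p hp
    have ht : (0 : ℝ) < ⟪X p, X p⟫ := by
      have h0 := hX0 p hp
      rw [real_inner_self_eq_norm_sq]
      exact pow_pos (norm_pos_iff.2 h0) 2
    set t := ⟪X p, X p⟫ with htdef
    set c := ⟪X p, N p⟫ with hcdef
    have hs : Real.sqrt t ≠ 0 := (Real.sqrt_pos.2 ht).ne'
    have h3 : Real.sqrt t ^ 2 = t := Real.sq_sqrt ht.le
    have key := key_alg (Real.sqrt t) c (lam1 p) (lam2 p) hs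
    rw [hKE p hp, hKt p hp, hH p hp, hK p hp, deriv_sqrt_pos ht, deriv_deriv_sqrt_pos ht]
    rw [h3] at key
    linear_combination key - lam1 p * lam2 p * h3
  constructor
  · intro h p hp
    rw [← main p hp]; exact h p hp
  · intro h p hp
    rw [main p hp]; exact h p hp
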